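/- Let H be a complex Hilbert space with dimension greater than one. There is no unit vector β ∈ H and linear isometry U : H ⊗ H → H ⊗ H such that U(ψ ⊗ β) = ψ ⊗ ψ for all unit vectors ψ ∈ H. -/

import Mathlib

open scoped TensorProduct

local notation "⟪" x ", " y "⟫" => @inner ℂ _ _ x y

lemma exists_orthonormal_pair {H : Type*} [NormedAddCommGroup H] [InnerProductSpace ℂ H]
    (hdim : 1 < Module.rank ℂ H) :
    ∃ e₁ e₂ : H, ‖e₁‖ = 1 ∧ ‖e₂‖ = 1 ∧ ⟪e₁, e₂⟫ = 0 := by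
  have h2 : ((2:ℕ) : Cardinal) ≤ Module.rank ℂ H := by
    have : ((1:ℕ) : Cardinal) + 1 ≤ Module.rank ℂ H :=
      Cardinal.natCast_add_one_le_iff.mpr (by exact_mod_cast hdim)
    exact_mod_cast this
  obtain ⟨f, hf⟩ := exists_linearIndependent_of_le_rank h2
  have hon := @InnerProductSpace.gramSchmidtNormed_orthonormal ℂ H _ _ _ (Fin 2) _ _
    (inferInstanceAs (WellFoundedLT (Fin 2))) f hf
  set g := @InnerProductSpace.gramSchmidtNormed ℂ H _ _ _ (Fin 2) _ _
    (inferInstanceAs (WellFoundedLT (Fin 2))) f with hg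
  refine ⟨g 0, g 1, hon.1 0, hon.1 1, ?_⟩
  exact hon.2 (by decide : (0 : Fin 2) ≠ 1)

/-- Traditional quantum no-cloning theorem: if `dim H > 1`, there is no unit vector `β`
and linear isometry `U : H ⊗ H → H ⊗ H` (isometry with respect to the induced inner
product `ip` on the tensor product, satisfying `ip (a ⊗ b) (c ⊗ d) = ⟪a,c⟫⟪b,d⟫`)
with `U (ψ ⊗ β) = ψ ⊗ ψ` for all unit vectors `ψ`. -/
theorem no_cloning_traditional_quantum
    {H : Type*} [NormedAddCommGroup H] [InnerProductSpace ℂ H]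
    (hdim : 1 < Module.rank ℂ H) :
    ¬ ∃ (β : H) (U : (H ⊗[ℂ] H) →ₗ[ℂ] (H ⊗[ℂ] H)) (ip : (H ⊗[ℂ] H) → (H ⊗[ℂ] H) → ℂ),
      ‖β‖ = 1 ∧
      (∀ a b c d : H, ip (a ⊗ₜ[ℂ] b) (c ⊗ₜ[ℂ] d) = ⟪a, c⟫ * ⟪b, d⟫) ∧
      (∀ s t : H ⊗[ℂ] H, ip (U s) (U t) = ip s t) ∧
      (∀ ψ : H, ‖ψ‖ = 1 → U (ψ ⊗ₜ[ℂ] β) = ψ ⊗ₜ[ℂ] ψ) := by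
  rintro ⟨β, U, ip, hβ, hip, hiso, hclone⟩
  obtain ⟨e₁, e₂, he₁, he₂, horth⟩ := exists_orthonormal_pair hdim
  have hsqrt2 : (0:ℝ) < Real.sqrt 2 := Real.sqrt_pos.mpr (by norm_num)
  set r : ℝ := (Real.sqrt 2)⁻¹ with hrdef
  have hrpos : (0:ℝ) < r := inv_pos.mpr hsqrt2
  set φ : H := ((r : ℂ)) • (e₁ + e₂) with hφdef
  have hsq : ‖e₁ + e₂‖ ^ 2 = 2 := by
    rw [@norm_add_sq ℂ, horth]
    simp [he₁, he₂]
    norm_num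
  have hnormsum : ‖e₁ + e₂‖ = Real.sqrt 2 := by
    rw [show (2:ℝ) = ‖e₁ + e₂‖ ^ 2 from hsq.symm, Real.sqrt_sq (norm_nonneg _)]
  have hφnorm : ‖φ‖ = 1 := by
    rw [hφdef, norm_smul, hnormsum, Complex.norm_real, Real.norm_eq_abs,
      abs_of_pos hrpos, hrdef]
    field_simp
  set c : ℂ := ⟪e₁, φ⟫ with hcdef
  have hc : c = (r : ℂ) := by
    rw [hcdef, hφdef, inner_smul_right, inner_add_right, horth,
      @inner_self_eq_norm_sq_to_K ℂ, he₁]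
    push_cast
    ring
  have hββ : ⟪β, β⟫ = 1 := by
    rw [@inner_self_eq_norm_sq_to_K ℂ, hβ]; norm_num
  have key : c = c * c := by
    have h1 := hiso (e₁ ⊗ₜ[ℂ] β) (φ ⊗ₜ[ℂ] β)
    rw [hclone e₁ he₁, hclone φ hφnorm, hip, hip, hββ] at h1
    rw [hcdef]
    linear_combination -h1
  have hre : r = r * r := by
    have : (r : ℂ) = (r : ℂ) * (r : ℂ) := by rw [← hc]; exact key
    exact_mod_cast this
  have hhalf : r * r = (1:ℝ)/2 := by
    rw [hrdef, ← mul_inv, Real.mul_self_sqrt (by norm_num : (0:ℝ) ≤ 2)]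
    norm_num
  have h3 : r = 1/2 := by rw [hre, hhalf]
  have h4 : Real.sqrt 2 = 2 := by
    rw [hrdef, inv_eq_iff_eq_inv] at h3
    rw [h3]; norm_num
  nlinarith [Real.sq_sqrt (by norm_num : (0:ℝ) ≤ 2)]
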